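/- Let β > 0, J ⊆ {1,…,m}, and points x̂, x* ∈ ℝ^p, ẑ, z* ∈ ℝ^m. Suppose: for every j ∈ J, f_j(x*) = 0, ẑ_j ≥ 0, z_j* ≥ 0, β f_j(x̂) + ẑ_j ≥ 0 and β f_j(x̂) + z_j* ≥ 0; and for every j ∉ J, z_j* = 0, β f_j(x̂) + ẑ_j < 0, β f_j(x̂) < 0, β f_j(x*) + ẑ_j < 0 and β f_j(x*) < 0. Then ∑_{j∈J}(ẑ_j − z_j*) f_j(x̂) = Ψ_β(x̂, ẑ) − Ψ_β(x̂, z*) − Ψ_β(x*, ẑ) + Ψ_β(x*, z*). -/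

import Mathlib

noncomputable section

/-- The function `ψ_β(u,v)` used in the classic augmented Lagrangian. -/
def psi (β u v : ℝ) : ℝ :=
  if 0 ≤ β * u + v then u * v + β / 2 * u ^ 2 else -(v ^ 2) / (2 * β)

/-- `Ψ_β(x,z) = ∑_j ψ_β(f_j(x), z_j)`. -/
def PsiAug {p m : ℕ} (β : ℝ) (f : Fin m → EuclideanSpace ℝ (Fin p) → ℝ)
    (x : EuclideanSpace ℝ (Fin p)) (z : EuclideanSpace ℝ (Fin m)) : ℝ :=
  ∑ j, psi β (f j x) (z j)

/-- Lemma psi-sum: under the stated sign conditions,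
`∑_{j∈J}(ẑ_j − z_j*) f_j(x̂) = Ψ_β(x̂,ẑ) − Ψ_β(x̂,z*) − Ψ_β(x*,ẑ) + Ψ_β(x*,z*)`. -/
theorem stmt13 {p m : ℕ} (β : ℝ) (hβ : 0 < β) (J : Finset (Fin m))
    (f : Fin m → EuclideanSpace ℝ (Fin p) → ℝ)
    (xh xs : EuclideanSpace ℝ (Fin p)) (zh zs : EuclideanSpace ℝ (Fin m))
    (hJin : ∀ j ∈ J, f j xs = 0 ∧ 0 ≤ zh j ∧ 0 ≤ zs j ∧
      0 ≤ β * f j xh + zh j ∧ 0 ≤ β * f j xh + zs j)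
    (hJout : ∀ j ∉ J, zs j = 0 ∧ β * f j xh + zh j < 0 ∧ β * f j xh < 0 ∧
      β * f j xs + zh j < 0 ∧ β * f j xs < 0) :
    ∑ j ∈ J, (zh j - zs j) * f j xh
      = PsiAug β f xh zh - PsiAug β f xh zs - PsiAug β f xs zh + PsiAug β f xs zs := by
  have key : ∀ j : Fin m,
      psi β (f j xh) (zh j) - psi β (f j xh) (zs j) - psi β (f j xs) (zh j)
        + psi β (f j xs) (zs j) = if j ∈ J then (zh j - zs j) * f j xh else 0 := by
    intro j
    by_cases hj : j ∈ J
    · obtain ⟨h0, h1, h2, h3, h4⟩ := hJin j hj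
      simp only [psi, h0, mul_zero, zero_add, if_pos h3, if_pos h4, if_pos h1, if_pos h2,
        if_pos hj]
      ring
    · obtain ⟨h0, h1, h2, h3, h4⟩ := hJout j hj
      simp only [psi, h0, add_zero, if_neg (not_le.2 h1), if_neg (not_le.2 h2),
        if_neg (not_le.2 h3), if_neg (not_le.2 h4), if_neg hj]
      ring
  have := Finset.sum_congr rfl (fun j (_ : j ∈ (Finset.univ : Finset (Fin m))) => key j)
  simp only [PsiAug, ← Finset.sum_sub_distrib, ← Finset.sum_add_distrib]
  rw [this, Finset.sum_ite_mem, Finset.univ_inter]
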